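/- With A_m(r) = ∑_{j=1}^{m} ((-1)^j/(j-1)!) ∑_{k=j}^{m} C(m,k) C(k-1,r-1) (-1)^k for integers m ≥ 1, r ≥ 1, one has A_m(0) = 0 (with the convention C(k-1,-1) interpreted via the defining sum being empty) and A_m(1) = ∑_{j=1}^{m} C(m-1, j-1)/(j-1)!, and A_m(r) → +∞ as m → ∞ for each fixed integer r ≥ 1. -/

import Mathlib

open Filter

/-- Binomial coefficient with integer lower index, `0` for negative lower index. -/
def chooseZ (n : ℕ) (k : ℤ) : ℚ :=
  if 0 ≤ k then (n.choose k.toNat : ℚ) else 0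

/-- `A_m(r)` from the paper, with the convention `C(k-1,-1) = 0` for `r = 0`. -/
noncomputable def A (m r : ℕ) : ℚ :=
  ∑ j ∈ Finset.Icc 1 m, ((-1 : ℚ) ^ j / (Nat.factorial (j - 1) : ℚ)) *
    ∑ k ∈ Finset.Icc j m, (m.choose k : ℚ) * chooseZ (k - 1) ((r : ℤ) - 1) * (-1 : ℚ) ^ k

/-- tail alternating sum of reciprocals of factorials -/
noncomputable def g (k M : ℕ) : ℚ :=
  ∑ i ∈ Finset.Icc k M, (-1 : ℚ) ^ (i - k) / (Nat.factorial i : ℚ)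

lemma g_of_lt {k M : ℕ} (h : M < k) : g k M = 0 := by
  rw [g, Finset.Icc_eq_empty (by omega), Finset.sum_empty]

lemma g_rec {k M : ℕ} (h : k ≤ M) :
    g k M = 1 / (Nat.factorial k : ℚ) - g (k + 1) M := by
  have hins : Finset.Icc k M = insert k (Finset.Icc (k + 1) M) := by
    rw [Finset.Icc_add_one_left_eq_Ioc, Finset.Ioc_insert_left h]
  rw [g, hins, Finset.sum_insert (by simp), Nat.sub_self, pow_zero]
  have h2 : ∑ i ∈ Finset.Icc (k + 1) M, (-1 : ℚ) ^ (i - k) / (Nat.factorial i : ℚ)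
      = ∑ i ∈ Finset.Icc (k + 1) M, -((-1 : ℚ) ^ (i - (k + 1)) / (Nat.factorial i : ℚ)) := by
    refine Finset.sum_congr rfl fun i hi => ?_
    have hik : k + 1 ≤ i := (Finset.mem_Icc.mp hi).1
    have he : i - k = (i - (k + 1)) + 1 := by omega
    rw [he, pow_succ]; ring
  rw [h2, Finset.sum_neg_distrib]
  unfold g; ring

lemma fact_pos (k : ℕ) : (0 : ℚ) < (Nat.factorial k : ℚ) := by
  exact_mod_cast Nat.factorial_pos k

lemma fact_inv_le (k : ℕ) : 1 / (Nat.factorial (k + 1) : ℚ) ≤ 1 / (Nat.factorial k : ℚ) := by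
  apply one_div_le_one_div_of_le (fact_pos k)
  exact_mod_cast Nat.factorial_le (Nat.le_succ k)

lemma g_bounds : ∀ n k M, M - k ≤ n → 0 ≤ g k M ∧ g k M ≤ 1 / (Nat.factorial k : ℚ) := by
  intro n
  induction n with
  | zero =>
    intro k M h
    rcases lt_or_ge M k with h1 | h1
    · rw [g_of_lt h1]
      exact ⟨le_refl 0, by positivity⟩
    · have : M = k := by omega
      subst this
      rw [g_rec (le_refl M), g_of_lt (by omega), sub_zero]
      exact ⟨by positivity, le_rfl⟩
  | succ n ih =>
    intro k M h
    rcases lt_or_ge M k with h1 | h1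
    · rw [g_of_lt h1]
      exact ⟨le_refl 0, by positivity⟩
    · obtain ⟨ih0, ih1⟩ := ih (k + 1) M (by omega)
      rw [g_rec h1]
      have := fact_inv_le k
      constructor <;> linarith

lemma g_nonneg (k M : ℕ) : 0 ≤ g k M := (g_bounds (M - k) k M le_rfl).1

lemma g_le (k M : ℕ) : g k M ≤ 1 / (Nat.factorial k : ℚ) := (g_bounds (M - k) k M le_rfl).2

lemma g_lower {k M : ℕ} (h : k + 1 ≤ M) :
    1 / (Nat.factorial k : ℚ) - 1 / (Nat.factorial (k + 1) : ℚ) ≤ g k M := by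
  rw [g_rec (by omega)]
  have := g_le (k + 1) M
  linarith

/-- alternating sum of binomials in ℚ vanishes -/
lemma alt_choose_zero {N : ℕ} (h : N ≠ 0) :
    ∑ t ∈ Finset.range (N + 1), (-1 : ℚ) ^ t * (N.choose t : ℚ) = 0 := by
  have h1 := Int.alternating_sum_range_choose_of_ne h
  have h2 := congrArg (fun z : ℤ => (z : ℚ)) h1
  push_cast at h2
  exact h2

/-- partial alternating sum of binomials -/
lemma alt_range (m : ℕ) : ∀ j, 1 ≤ j → j ≤ m →
    ∑ k ∈ Finset.range j, (-1 : ℚ) ^ k * (m.choose k : ℚ)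
      = (-1 : ℚ) ^ (j - 1) * ((m - 1).choose (j - 1) : ℚ) := by
  intro j
  induction j with
  | zero => omega
  | succ j ih =>
    intro _ hjm
    rcases Nat.eq_zero_or_pos j with rfl | hj
    · simp
    · have hj' : j ≤ m := by omega
      obtain ⟨M, rfl⟩ : ∃ M, m = M + 1 := ⟨m - 1, by omega⟩
      obtain ⟨J, rfl⟩ : ∃ J, j = J + 1 := ⟨j - 1, by omega⟩
      rw [Finset.sum_range_succ, ih (by omega) hj']
      simp only [Nat.add_sub_cancel, Nat.choose_succ_succ]
      push_cast
      ring

lemma alt_Icc (m : ℕ) (hm : 1 ≤ m) : ∀ j, 1 ≤ j → j ≤ m →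
    ∑ k ∈ Finset.Icc j m, (-1 : ℚ) ^ k * (m.choose k : ℚ)
      = (-1 : ℚ) ^ j * ((m - 1).choose (j - 1) : ℚ) := by
  intro j hj hjm
  have hfull : ∑ k ∈ Finset.range (m + 1), (-1 : ℚ) ^ k * (m.choose k : ℚ) = 0 :=
    alt_choose_zero (by omega)
  have hsplit := Finset.sum_range_add_sum_Ico
    (fun k => (-1 : ℚ) ^ k * (m.choose k : ℚ)) (show j ≤ m + 1 by omega)
  rw [hfull] at hsplit
  have hIcc : Finset.Ico j (m + 1) = Finset.Icc j m := Finset.Ico_add_one_right_eq_Icc j m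
  rw [hIcc] at hsplit
  rw [alt_range m j hj hjm] at hsplit
  obtain ⟨J, rfl⟩ : ∃ J, j = J + 1 := ⟨j - 1, by omega⟩
  simp only [Nat.add_sub_cancel] at hsplit ⊢
  rw [pow_succ]
  linarith

/-- chooseZ at r-1 for r ≥ 1 -/
lemma chooseZ_eq (n r : ℕ) (hr : 1 ≤ r) :
    chooseZ n ((r : ℤ) - 1) = ((n.choose (r - 1) : ℕ) : ℚ) := by
  have h0 : (0 : ℤ) ≤ (r : ℤ) - 1 := by omega
  have h1 : ((r : ℤ) - 1).toNat = r - 1 := by omega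
  rw [chooseZ, if_pos h0, h1]

lemma chooseZ_nonneg (n : ℕ) (k : ℤ) : 0 ≤ chooseZ n k := by
  rw [chooseZ]; split <;> positivity

/-- the inner-sum identity I: `∑ (-1)^l C(m,l) C(l,s) = 0` for `s < m`. -/
lemma alt_choose_choose {m s : ℕ} (h : s < m) :
    ∑ l ∈ Finset.range (m + 1), (-1 : ℚ) ^ l * (m.choose l : ℚ) * (l.choose s : ℚ) = 0 := by
  have hsm : s ≤ m + 1 := by omega
  rw [← Finset.sum_range_add_sum_Ico _ hsm]
  have h1 : ∑ l ∈ Finset.range s, (-1 : ℚ) ^ l * (m.choose l : ℚ) * (l.choose s : ℚ) = 0 := by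
    refine Finset.sum_eq_zero fun l hl => ?_
    rw [Nat.choose_eq_zero_of_lt (Finset.mem_range.mp hl)]
    simp
  rw [h1, zero_add, Finset.sum_Ico_eq_sum_range]
  have h2 : ∀ t ∈ Finset.range (m + 1 - s),
      (-1 : ℚ) ^ (s + t) * (m.choose (s + t) : ℚ) * ((s + t).choose s : ℚ)
        = (-1 : ℚ) ^ s * (m.choose s : ℚ) * ((-1 : ℚ) ^ t * ((m - s).choose t : ℚ)) := by
    intro t ht
    have htm : s + t ≤ m := by
      have := Finset.mem_range.mp ht; omega
    have hc := Nat.choose_mul (n := m) (k := s + t) (s := s) (by omega)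
    have hq : (m.choose (s + t) : ℚ) * ((s + t).choose s : ℚ)
        = (m.choose s : ℚ) * ((m - s).choose (s + t - s) : ℚ) := by exact_mod_cast hc
    have hst : s + t - s = t := by omega
    rw [hst] at hq
    rw [pow_add]
    linear_combination ((-1 : ℚ) ^ s * (-1 : ℚ) ^ t) * hq
  rw [Finset.sum_congr rfl h2, ← Finset.mul_sum]
  have h3 : m + 1 - s = (m - s) + 1 := by omega
  rw [h3, alt_choose_zero (show m - s ≠ 0 by omega), mul_zero]

/-- F identity: `∑_{k∈Icc 1 m} (-1)^k C(m,k) C(k-1,r-1) = (-1)^r` for `1 ≤ r ≤ m`. -/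
lemma F_id (r : ℕ) (hr : 1 ≤ r) : ∀ m, r ≤ m →
    ∑ k ∈ Finset.Icc 1 m, (-1 : ℚ) ^ k * (m.choose k : ℚ) * (((k - 1).choose (r - 1) : ℕ) : ℚ)
      = (-1 : ℚ) ^ r := by
  refine Nat.le_induction ?_ ?_
  · -- base m = r
    rw [Finset.sum_eq_single_of_mem r (Finset.mem_Icc.mpr ⟨hr, le_rfl⟩)]
    · simp [Nat.choose_self]
    · intro k hk hkr
      have hk' := Finset.mem_Icc.mp hk
      rw [Nat.choose_eq_zero_of_lt (show k - 1 < r - 1 by omega)]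
      simp
  · -- step
    intro m hm ih
    have hsplit : ∀ k ∈ Finset.Icc 1 (m + 1),
        (-1 : ℚ) ^ k * ((m + 1).choose k : ℚ) * (((k - 1).choose (r - 1) : ℕ) : ℚ)
          = (-1 : ℚ) ^ k * (m.choose k : ℚ) * (((k - 1).choose (r - 1) : ℕ) : ℚ)
            + (-1 : ℚ) ^ k * (m.choose (k - 1) : ℚ) * (((k - 1).choose (r - 1) : ℕ) : ℚ) := by
      intro k hk
      have hk' := Finset.mem_Icc.mp hk
      obtain ⟨K, rfl⟩ : ∃ K, k = K + 1 := ⟨k - 1, by omega⟩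
      simp only [Nat.add_sub_cancel, Nat.choose_succ_succ' m K]
      push_cast
      ring
    rw [Finset.sum_congr rfl hsplit, Finset.sum_add_distrib]
    have hA : ∑ k ∈ Finset.Icc 1 (m + 1),
        (-1 : ℚ) ^ k * (m.choose k : ℚ) * (((k - 1).choose (r - 1) : ℕ) : ℚ) = (-1 : ℚ) ^ r := by
      rw [Finset.sum_Icc_succ_top (show 1 ≤ m + 1 by omega), Nat.choose_succ_self m]
      simpa using ih
    have hB : ∑ k ∈ Finset.Icc 1 (m + 1),
        (-1 : ℚ) ^ k * (m.choose (k - 1) : ℚ) * (((k - 1).choose (r - 1) : ℕ) : ℚ) = 0 := by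
      have hmap : Finset.Icc 1 (m + 1) = Finset.map ⟨fun l => l + 1, add_left_injective 1⟩
          (Finset.range (m + 1)) := by
        ext x
        simp [Finset.mem_map]
        constructor
        · intro hx; exact ⟨x - 1, by omega, by omega⟩
        · rintro ⟨a, ha, rfl⟩; omega
      rw [hmap, Finset.sum_map]
      simp only [Function.Embedding.coeFn_mk, Nat.add_sub_cancel]
      have : ∀ l ∈ Finset.range (m + 1),
          (-1 : ℚ) ^ (l + 1) * (m.choose l : ℚ) * ((l.choose (r - 1) : ℕ) : ℚ)
            = -((-1 : ℚ) ^ l * (m.choose l : ℚ) * ((l.choose (r - 1) : ℕ) : ℚ)) := by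
        intro l _; rw [pow_succ]; ring
      rw [Finset.sum_congr rfl this, Finset.sum_neg_distrib,
        alt_choose_choose (show r - 1 < m by omega), neg_zero]
    rw [hA, hB, add_zero]

/-- partial sum S_k -/
noncomputable def S (k : ℕ) : ℚ :=
  ∑ j ∈ Finset.Icc 1 k, (-1 : ℚ) ^ j / (Nat.factorial (j - 1) : ℚ)

lemma S_diff {m k : ℕ} (hm : 1 ≤ m) (hk : k ≤ m) :
    S m = S k + (-1 : ℚ) ^ (k + 1) * g k (m - 1) := by
  have h1 : S m = S k + ∑ j ∈ Finset.Ioc k m, (-1 : ℚ) ^ j / (Nat.factorial (j - 1) : ℚ) := by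
    rw [S, S, show Finset.Icc 1 m = Finset.Ioc 0 m from Finset.Icc_add_one_left_eq_Ioc 0 m,
      show Finset.Icc 1 k = Finset.Ioc 0 k from Finset.Icc_add_one_left_eq_Ioc 0 k]
    exact (Finset.sum_Ioc_consecutive _ (Nat.zero_le k) hk).symm
  rw [h1]
  congr 1
  have hmap : Finset.Ioc k m = Finset.map ⟨fun l => l + 1, add_left_injective 1⟩
      (Finset.Icc k (m - 1)) := by
    ext x
    simp [Finset.mem_map]
    constructor
    · intro hx; exact ⟨x - 1, by omega, by omega⟩
    · rintro ⟨a, ha, rfl⟩; omega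
  rw [hmap, Finset.sum_map, g, Finset.mul_sum]
  refine Finset.sum_congr rfl fun i hi => ?_
  have hik : k ≤ i := (Finset.mem_Icc.mp hi).1
  simp only [Function.Embedding.coeFn_mk, Nat.add_sub_cancel]
  have heq : (k + 1) + (i - k) = i + 1 := by omega
  have hp : (-1 : ℚ) ^ (k + 1) * (-1 : ℚ) ^ (i - k) = (-1 : ℚ) ^ (i + 1) := by
    rw [← pow_add, heq]
  linear_combination (-(1 / (Nat.factorial i : ℚ))) * hp

/-- main decomposition of A for r ≥ 1, m ≥ max(r,1) -/
lemma A_decomp (m r : ℕ) (hr : 1 ≤ r) (hm : r ≤ m) :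
    A m r = S m * (-1 : ℚ) ^ r
      + ∑ k ∈ Finset.Icc 1 m,
          (m.choose k : ℚ) * (((k - 1).choose (r - 1) : ℕ) : ℚ) * g k (m - 1) := by
  have hm1 : 1 ≤ m := le_trans hr hm
  -- swap the sums
  have hswap : A m r = ∑ k ∈ Finset.Icc 1 m,
      ((m.choose k : ℚ) * chooseZ (k - 1) ((r : ℤ) - 1) * (-1 : ℚ) ^ k) * S k := by
    rw [A]
    have h1 : ∀ j ∈ Finset.Icc 1 m,
        ((-1 : ℚ) ^ j / (Nat.factorial (j - 1) : ℚ)) *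
          ∑ k ∈ Finset.Icc j m, (m.choose k : ℚ) * chooseZ (k - 1) ((r : ℤ) - 1) * (-1 : ℚ) ^ k
        = ∑ k ∈ Finset.Icc j m, ((-1 : ℚ) ^ j / (Nat.factorial (j - 1) : ℚ)) *
            ((m.choose k : ℚ) * chooseZ (k - 1) ((r : ℤ) - 1) * (-1 : ℚ) ^ k) :=
      fun j _ => Finset.mul_sum _ _ _
    rw [Finset.sum_congr rfl h1]
    simp only [← Finset.Ico_add_one_right_eq_Icc]
    rw [Finset.sum_Ico_Ico_comm]
    refine Finset.sum_congr rfl fun k hk => ?_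
    rw [show Finset.Ico 1 (k + 1) = Finset.Icc 1 k from Finset.Ico_add_one_right_eq_Icc 1 k, S,
      Finset.mul_sum]
    exact Finset.sum_congr rfl fun j _ => by ring
  rw [hswap]
  have h2 : ∀ k ∈ Finset.Icc 1 m,
      ((m.choose k : ℚ) * chooseZ (k - 1) ((r : ℤ) - 1) * (-1 : ℚ) ^ k) * S k
        = ((-1 : ℚ) ^ k * (m.choose k : ℚ) * (((k - 1).choose (r - 1) : ℕ) : ℚ)) * S m
          + (m.choose k : ℚ) * (((k - 1).choose (r - 1) : ℕ) : ℚ) * g k (m - 1) := by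
    intro k hk
    have hkm := Finset.mem_Icc.mp hk
    rw [chooseZ_eq _ r hr, S_diff hm1 hkm.2]
    have hpow : (-1 : ℚ) ^ k * (-1 : ℚ) ^ (k + 1) = -1 := by
      rw [← pow_add]
      have : k + (k + 1) = 2 * k + 1 := by omega
      rw [this, pow_succ, pow_mul]
      simp
    linear_combination (-((m.choose k : ℚ) * (((k - 1).choose (r - 1) : ℕ) : ℚ)
      * g k (m - 1))) * hpow
  rw [Finset.sum_congr rfl h2, Finset.sum_add_distrib]
  congr 1
  rw [← Finset.sum_mul, F_id r hr m hm]
  ring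

lemma S_bounds (m : ℕ) (hm : 1 ≤ m) : -1 ≤ S m ∧ S m ≤ 0 := by
  have h := S_diff hm (show 0 ≤ m by omega)
  have hS0 : S 0 = 0 := by simp [S]
  rw [hS0, zero_add] at h
  have h1 := g_nonneg 0 (m - 1)
  have h2 := g_le 0 (m - 1)
  rw [Nat.factorial_zero] at h2
  norm_num at h2
  rw [h, pow_one, neg_one_mul]
  constructor <;> linarith

lemma choose_lb (r : ℕ) (hr : 1 ≤ r) : ∀ m, r ≤ m → m - r + 1 ≤ m.choose r := by
  refine Nat.le_induction ?_ ?_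
  · simp
  · intro m hm ih
    obtain ⟨R, rfl⟩ : ∃ R, r = R + 1 := ⟨r - 1, by omega⟩
    rw [Nat.choose_succ_succ m R]
    have h1 : 1 ≤ m.choose R := Nat.choose_pos (by omega)
    simp only [Nat.succ_eq_add_one] at ih ⊢
    omega

theorem stmt15 :
    (∀ m : ℕ, 1 ≤ m → A m 0 = 0) ∧
    (∀ m : ℕ, 1 ≤ m →
      A m 1 = ∑ j ∈ Finset.Icc 1 m,
        ((m - 1).choose (j - 1) : ℚ) / (Nat.factorial (j - 1) : ℚ)) ∧
    (∀ r : ℕ, 1 ≤ r → Tendsto (fun m : ℕ => A m r) atTop atTop) := by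
  refine ⟨?_, ?_, ?_⟩
  · intro m _
    simp [A, chooseZ]
  · intro m hm
    rw [A]
    refine Finset.sum_congr rfl fun j hj => ?_
    have hj' := Finset.mem_Icc.mp hj
    have hcz : ∀ k ∈ Finset.Icc j m,
        (m.choose k : ℚ) * chooseZ (k - 1) ((1 : ℕ) - 1 : ℤ) * (-1 : ℚ) ^ k
          = (-1 : ℚ) ^ k * (m.choose k : ℚ) := by
      intro k _
      norm_num [chooseZ]
      ring
    rw [Finset.sum_congr rfl hcz, alt_Icc m hm j hj'.1 hj'.2]
    have hpow : (-1 : ℚ) ^ j * (-1 : ℚ) ^ j = 1 := by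
      rw [← pow_add]
      have : j + j = 2 * j := by omega
      rw [this, pow_mul]; norm_num
    linear_combination ((((m - 1).choose (j - 1) : ℕ) : ℚ)
      / ((Nat.factorial (j - 1) : ℕ) : ℚ)) * hpow
  · intro r hr
    set d : ℚ := 1 / (Nat.factorial r : ℚ) - 1 / (Nat.factorial (r + 1) : ℚ) with hd
    have hdpos : 0 < d := by
      rw [hd]
      have h1 : (Nat.factorial r : ℚ) < (Nat.factorial (r + 1) : ℚ) := by
        exact_mod_cast Nat.factorial_lt (by omega) |>.mpr (by omega)
      have := fact_pos r
      have := fact_pos (r + 1)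
      rw [sub_pos]
      exact one_div_lt_one_div_of_lt (fact_pos r) h1
    have key : ∀ m, r + 2 ≤ m → ((m - r : ℕ) : ℚ) * d - 1 ≤ A m r := by
      intro m hm2
      have hm1 : 1 ≤ m := by omega
      have hrm : r ≤ m := by omega
      rw [A_decomp m r hr hrm]
      have hS := S_bounds m hm1
      have hterm1 : -1 ≤ S m * (-1 : ℚ) ^ r := by
        rcases Nat.even_or_odd r with he | ho
        · rw [he.neg_one_pow]; nlinarith [hS.1, hS.2]
        · rw [ho.neg_one_pow]; nlinarith [hS.1, hS.2]
      have hterm2 : ((m - r : ℕ) : ℚ) * d ≤ ∑ k ∈ Finset.Icc 1 m,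
          (m.choose k : ℚ) * (((k - 1).choose (r - 1) : ℕ) : ℚ) * g k (m - 1) := by
        have hsingle : (m.choose r : ℚ) * (((r - 1).choose (r - 1) : ℕ) : ℚ) * g r (m - 1)
            ≤ ∑ k ∈ Finset.Icc 1 m,
              (m.choose k : ℚ) * (((k - 1).choose (r - 1) : ℕ) : ℚ) * g k (m - 1) := by
          refine Finset.single_le_sum
            (f := fun k => (m.choose k : ℚ) * (((k - 1).choose (r - 1) : ℕ) : ℚ) * g k (m - 1))
            (fun k _ => ?_) (Finset.mem_Icc.mpr ⟨hr, hrm⟩)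
          have := g_nonneg k (m - 1)
          positivity
        have hcs : ((r - 1).choose (r - 1) : ℚ) = 1 := by
          rw [Nat.choose_self]; norm_num
        rw [hcs, mul_one] at hsingle
        have hglow : d ≤ g r (m - 1) := g_lower (by omega)
        have hch : ((m - r : ℕ) : ℚ) ≤ (m.choose r : ℚ) := by
          have h5 := choose_lb r hr m hrm
          have h6 : m - r ≤ m.choose r := by omega
          exact_mod_cast h6
        have hchnn : (0 : ℚ) ≤ (m.choose r : ℚ) := by positivity
        nlinarith [g_nonneg r (m - 1)]
      linarith
    have htend : Tendsto (fun m : ℕ => ((m - r : ℕ) : ℚ) * d - 1) atTop atTop := by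
      have h1 : Tendsto (fun m : ℕ => ((m - r : ℕ) : ℚ)) atTop atTop :=
        tendsto_natCast_atTop_atTop.comp (tendsto_sub_atTop_nat r)
      exact tendsto_atTop_add_const_right atTop (-1 : ℚ) (h1.atTop_mul_const hdpos) |>.congr
        (fun m => by ring)
    exact tendsto_atTop_mono' atTop (Filter.eventually_atTop.mpr ⟨r + 2, key⟩) htend
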